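/- For every integer m ≥ 1 there is a (unique) ring endomorphism γ_m of R₀ with γ_m(q) = q^m and γ_m(ε) = ε·q^{m−1}·[m]_q. These endomorphisms satisfy γ_m ∘ γ_{m'} = γ_{m·m'} for all m, m' ≥ 1, and they are equivariant for ψ: for every f ∈ ℤ[q], γ_m(ψ(f)) = ψ(f(q^m)); in particular γ_m(q + ε·[p]_q) = q^m + ε·q^{m−1}·[p·m]_q. (This is the integer-exponent form of the 𝔽_p^×-equivariance of ψ, where u ∈ 𝔽_p^× acts through the Teichmüller lift.) -/

import Mathlib

open Finset

/-- The q-analogue `[n]_t = ∑_{i=0}^{n-1} t^i`. -/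
def qan {A : Type*} [CommRing A] (t : A) (n : ℕ) : A := ∑ i ∈ Finset.range n, t ^ i

/-- The polynomial `ε² − q·(q−1)·ε` over `ℤ[q]`. -/
noncomputable def relPoly : Polynomial (Polynomial ℤ) :=
  Polynomial.X ^ 2 -
    Polynomial.C (Polynomial.X * (Polynomial.X - 1) : Polynomial ℤ) * Polynomial.X

/-- `R₀ := ℤ[q][ε]/(ε² − q·(q−1)·ε)`, a free `ℤ[q]`-module with basis `1, ε`. -/
noncomputable abbrev R₀ := AdjoinRoot relPoly

/-- `q ∈ R₀`. -/
noncomputable def qR : R₀ := algebraMap (Polynomial ℤ) R₀ Polynomial.X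

/-- `ε ∈ R₀`. -/
noncomputable def epsR : R₀ := AdjoinRoot.root relPoly

/-- `ψ : ℤ[q] → R₀` is the ring homomorphism given by evaluation at `q + ε·[p]_q`. -/
noncomputable def psiMap (p : ℕ) : Polynomial ℤ →+* R₀ :=
  (Polynomial.aeval (qR + epsR * qan qR p) : Polynomial ℤ →ₐ[ℤ] R₀).toRingHom

lemma aux_geom {A : Type*} [CommRing A] (t : A) (n : ℕ) :
    (t - 1) * qan t n = t ^ n - 1 := mul_geom_sum t n

lemma aux_qan_add {A : Type*} [CommRing A] (t : A) (a b : ℕ) :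
    qan t (a + b) = qan t a + t ^ a * qan t b := by
  induction b with
  | zero => simp [qan]
  | succ n ih =>
    have e1 : qan t (a + (n + 1)) = qan t (a + n) + t ^ (a + n) := by
      rw [← Nat.add_assoc, qan, Finset.sum_range_succ, ← qan]
    have e2 : qan t (n + 1) = qan t n + t ^ n := by
      rw [qan, Finset.sum_range_succ, ← qan]
    rw [e1, e2, ih, pow_add]
    ring

lemma aux_qan_mul {A : Type*} [CommRing A] (t : A) (a b : ℕ) :
    qan t a * qan (t ^ a) b = qan t (a * b) := by
  induction b with
  | zero => simp [qan]
  | succ n ih =>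
    have h : a * (n + 1) = a * n + a := by ring
    have e2 : qan (t ^ a) (n + 1) = qan (t ^ a) n + (t ^ a) ^ n := by
      rw [qan, Finset.sum_range_succ, ← qan]
    rw [h, aux_qan_add t (a * n) a, ← ih, e2]
    ring

lemma aux_map_qan {A B : Type*} [CommRing A] [CommRing B] (f : A →+* B) (t : A) (n : ℕ) :
    f (qan t n) = qan (f t) n := by
  simp [qan]

lemma aux_eval₂_relPoly {S : Type*} [CommRing S] (i : Polynomial ℤ →+* S) (x : S) :
    relPoly.eval₂ i x = x ^ 2 - i (Polynomial.X * (Polynomial.X - 1)) * x := by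
  simp [relPoly]

lemma aux_eps_sq : epsR ^ 2 = qR * (qR - 1) * epsR := by
  have h := AdjoinRoot.eval₂_root relPoly
  rw [aux_eval₂_relPoly] at h
  have h2 : (AdjoinRoot.of relPoly) (Polynomial.X * (Polynomial.X - 1))
      = qR * (qR - 1) := by
    rw [← AdjoinRoot.algebraMap_eq, map_mul, map_sub, map_one]
    rfl
  rw [h2] at h
  simpa [epsR] using sub_eq_zero.mp h

lemma aux_ext {S : Type*} [CommRing S] {γ γ' : R₀ →+* S}
    (h1 : γ qR = γ' qR) (h2 : γ epsR = γ' epsR) : γ = γ' := by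
  have hmk : γ.comp (AdjoinRoot.mk relPoly) = γ'.comp (AdjoinRoot.mk relPoly) := by
    apply Polynomial.ringHom_ext'
    · apply Polynomial.ringHom_ext'
      · exact RingHom.ext_int _ _
      · show γ ((AdjoinRoot.mk relPoly) (Polynomial.C Polynomial.X))
            = γ' ((AdjoinRoot.mk relPoly) (Polynomial.C Polynomial.X))
        rw [AdjoinRoot.mk_C, ← AdjoinRoot.algebraMap_eq]
        exact h1
    · show γ ((AdjoinRoot.mk relPoly) Polynomial.X) = γ' ((AdjoinRoot.mk relPoly) Polynomial.X)
      rw [AdjoinRoot.mk_X]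
      exact h2
  refine RingHom.ext fun x => ?_
  obtain ⟨g, rfl⟩ := AdjoinRoot.mk_surjective x
  exact RingHom.congr_fun hmk g

lemma aux_rel (n : ℕ) :
    relPoly.eval₂ ((Polynomial.aeval (qR ^ (n + 1)) : Polynomial ℤ →ₐ[ℤ] R₀) : Polynomial ℤ →+* R₀)
      (epsR * qR ^ n * qan qR (n + 1)) = 0 := by
  have h1 := aux_eps_sq
  have h2 := aux_geom qR (n + 1)
  rw [aux_eval₂_relPoly]
  have h3 : ((Polynomial.aeval (qR ^ (n + 1)) : Polynomial ℤ →ₐ[ℤ] R₀) :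
      Polynomial ℤ →+* R₀) (Polynomial.X * (Polynomial.X - 1))
      = qR ^ (n + 1) * (qR ^ (n + 1) - 1) := by
    simp
  rw [h3]
  linear_combination (qR ^ (2 * n) * qan qR (n + 1) ^ 2) * h1 +
    (epsR * qR ^ (2 * n + 1) * qan qR (n + 1)) * h2

noncomputable def gam (n : ℕ) : R₀ →+* R₀ :=
  AdjoinRoot.lift
    ((Polynomial.aeval (qR ^ (n + 1)) : Polynomial ℤ →ₐ[ℤ] R₀) : Polynomial ℤ →+* R₀)
    (epsR * qR ^ n * qan qR (n + 1)) (aux_rel n)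

lemma gam_q (n : ℕ) : gam n qR = qR ^ (n + 1) := by
  rw [qR, AdjoinRoot.algebraMap_eq, gam, AdjoinRoot.lift_of]
  simp [qR, AdjoinRoot.algebraMap_eq]

lemma gam_eps (n : ℕ) : gam n epsR = epsR * qR ^ n * qan qR (n + 1) :=
  AdjoinRoot.lift_root _

lemma aux_pow_s (p n : ℕ) :
    (qR + epsR * qan qR p) ^ (n + 1)
      = qR ^ (n + 1) + epsR * qR ^ n * qan qR (p * (n + 1)) := by
  induction n with
  | zero => simp [mul_comm]
  | succ n ih =>
    have h1 := aux_eps_sq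
    have h2 := aux_geom qR p
    have h3 : qan qR (p * (n + 2)) = qan qR p + qR ^ p * qan qR (p * (n + 1)) := by
      have : p * (n + 2) = p + p * (n + 1) := by ring
      rw [this, aux_qan_add]
    rw [pow_succ, ih, h3]
    linear_combination (qR ^ n * qan qR p * qan qR (p * (n + 1))) * h1 +
      (epsR * qR ^ (n + 1) * qan qR (p * (n + 1))) * h2

/-- For every `m ≥ 1` there is a unique ring endomorphism `γ_m` of `R₀`
with `γ_m(q) = q^m` and `γ_m(ε) = ε·q^{m−1}·[m]_q`; these satisfy `γ_m ∘ γ_{m'} = γ_{m·m'}`,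
and they are equivariant for `ψ`: `γ_m(ψ(f)) = ψ(f(q^m))` for every `f ∈ ℤ[q]`, in
particular `γ_m(q + ε·[p]_q) = q^m + ε·q^{m−1}·[p·m]_q`. -/
theorem stmt15 (p : ℕ) (hp : p.Prime) :
    (∀ m : ℕ, 1 ≤ m → ∃! γ : R₀ →+* R₀,
      γ qR = qR ^ m ∧ γ epsR = epsR * qR ^ (m - 1) * qan qR m) ∧
    (∀ m m' : ℕ, 1 ≤ m → 1 ≤ m' → ∀ γ γ' γ'' : R₀ →+* R₀,
      (γ qR = qR ^ m ∧ γ epsR = epsR * qR ^ (m - 1) * qan qR m) →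
      (γ' qR = qR ^ m' ∧ γ' epsR = epsR * qR ^ (m' - 1) * qan qR m') →
      (γ'' qR = qR ^ (m * m') ∧ γ'' epsR = epsR * qR ^ (m * m' - 1) * qan qR (m * m')) →
      γ'' = γ.comp γ') ∧
    (∀ m : ℕ, 1 ≤ m → ∀ γ : R₀ →+* R₀,
      (γ qR = qR ^ m ∧ γ epsR = epsR * qR ^ (m - 1) * qan qR m) →
      (∀ f : Polynomial ℤ, γ (psiMap p f) = psiMap p (f.comp (Polynomial.X ^ m))) ∧
      γ (qR + epsR * qan qR p) = qR ^ m + epsR * qR ^ (m - 1) * qan qR (p * m)) := by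
  refine ⟨?_, ?_, ?_⟩
  · -- existence and uniqueness
    intro m hm
    obtain ⟨n, rfl⟩ : ∃ n, m = n + 1 := ⟨m - 1, by omega⟩
    refine ⟨gam n, ⟨gam_q n, by simpa using gam_eps n⟩, ?_⟩
    rintro γ ⟨hq, he⟩
    apply aux_ext
    · rw [hq, gam_q]
    · rw [he, gam_eps]
      simp
  · -- composition
    rintro m m' hm hm' γ γ' γ'' ⟨hq, he⟩ ⟨hq', he'⟩ ⟨hq'', he''⟩
    obtain ⟨a, rfl⟩ : ∃ a, m = a + 1 := ⟨m - 1, by omega⟩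
    obtain ⟨b, rfl⟩ : ∃ b, m' = b + 1 := ⟨m' - 1, by omega⟩
    apply aux_ext
    · rw [hq'', RingHom.comp_apply, hq', map_pow, hq, ← pow_mul]
    · rw [he'', RingHom.comp_apply, he', map_mul, map_mul, he, map_pow, hq,
        aux_map_qan, hq]
      have hexp : qR ^ ((a + 1) * (b + 1) - 1) = qR ^ a * (qR ^ (a + 1)) ^ b := by
        rw [← pow_mul, ← pow_add]
        congr 1
        have h : (a + 1) * (b + 1) = a + (a + 1) * b + 1 := by ring
        omega
      rw [← aux_qan_mul qR (a + 1) (b + 1), hexp]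
      simp only [Nat.add_sub_cancel]
      ring
  · -- equivariance
    rintro m hm γ ⟨hq, he⟩
    obtain ⟨n, rfl⟩ : ∃ n, m = n + 1 := ⟨m - 1, by omega⟩
    set s : R₀ := qR + epsR * qan qR p with hs
    have hγs : γ s = s ^ (n + 1) := by
      rw [aux_pow_s, hs, map_add, map_mul, hq, he, aux_map_qan, hq]
      have h1 : p * (n + 1) = (n + 1) * p := by ring
      rw [h1, ← aux_qan_mul qR (n + 1) p]
      simp only [Nat.add_sub_cancel]
      ring
    constructor
    · intro f
      have e1 : psiMap p f = Polynomial.eval₂ (algebraMap ℤ R₀) s f := by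
        simp [psiMap, Polynomial.aeval_def, hs]
      have e2 : γ.comp (algebraMap ℤ R₀) = algebraMap ℤ R₀ := RingHom.ext_int _ _
      rw [e1, Polynomial.hom_eval₂, e2, hγs]
      have e3 : psiMap p (f.comp (Polynomial.X ^ (n + 1)))
          = Polynomial.aeval (s ^ (n + 1)) f := by
        simp [psiMap, Polynomial.aeval_comp, hs]
      rw [e3, Polynomial.aeval_def]
    · rw [hγs, aux_pow_s]
      simp
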